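/- arXiv:1503.01833 — 5 statements merged into one kernel-verified Lean document; each statement's English description precedes it below -/
import Mathlib

section
/- In the Brauer algebra Br(G₂), the relation r₁r₀e₁r₀r₁e₀ = δe₀ holds. -/
/-- In Br(G₂), r₁r₀e₁r₀r₁e₀ = δe₀. -/
theorem brauerG2_rel_delta_e0 {A : Type*} [Ring A] (δ r0 r1 e0 e1 : A)
    (hδ : ∀ x : A, δ * x = x * δ) (hδu : IsUnit δ)
    (h1 : r0 * r0 = 1) (h2 : r1 * r1 = 1)
    (h3 : r0 * e0 = e0) (h4 : e0 * r0 = e0)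
    (h5 : r1 * e1 = e1) (h6 : e1 * r1 = e1)
    (h7 : e0 * e0 = δ ^ 3 * e0) (h8 : e1 * e1 = δ * e1)
    (h9 : r0 * e1 * e0 = r1 * e0) (h10 : e0 * e1 * r0 = e0 * r1)
    (h11 : e1 * r0 * e1 * r0 * e1 = e1)
    (h12 : e1 * r0 * e1 * r0 * r1 = e1 * r0 * r1 * r0)
    (h13 : e0 * r1 * e0 = δ ^ 2 * e0)
    (h14 : r1 * r0 * e1 * r0 * e1 = r0 * r1 * r0 * e1)
    (h15 : (r1 * r0) ^ 6 = 1) :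
    r1 * r0 * e1 * r0 * r1 * e0 = δ * e0 := by
  have h9' : r0 * (e1 * e0) = r1 * e0 := by rw [← mul_assoc, h9]
  have comm : ∀ a b : A, a * (δ * b) = δ * (a * b) := fun a b => by
    rw [← mul_assoc, ← hδ, mul_assoc]
  calc r1 * r0 * e1 * r0 * r1 * e0
      = r1 * (r0 * (e1 * (r0 * (r1 * e0)))) := by
        simp only [mul_assoc]
    _ = r1 * (r0 * (e1 * (r0 * (r0 * (e1 * e0))))) := by rw [h9']
    _ = r1 * (r0 * (e1 * (r0 * r0 * (e1 * e0)))) := by rw [mul_assoc r0 r0]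
    _ = r1 * (r0 * (e1 * e1 * e0)) := by rw [h1, one_mul]; simp only [mul_assoc]
    _ = r1 * (r0 * (δ * (e1 * e0))) := by rw [h8]; simp only [mul_assoc]
    _ = δ * (r1 * (r0 * (e1 * e0))) := by rw [comm, comm]
    _ = δ * (r1 * (r1 * e0)) := by rw [h9']
    _ = δ * e0 := by rw [← mul_assoc r1 r1, h2, one_mul]
end

section
/- In the Brauer algebra Br(G₂), the elements r₁r₀r₁r₀r₁ and r₀ commute with e₀ and satisfy (r₁r₀r₁r₀r₁)e₀(r₁r₀r₁r₀r₁) = e₀ and r₀e₀r₀ = e₀. -/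
/-- In Br(G₂), r₁r₀r₁r₀r₁ and r₀ commute with e₀, (r₁r₀r₁r₀r₁)e₀(r₁r₀r₁r₀r₁) = e₀ and r₀e₀r₀ = e₀. -/
theorem brauerG2_stab_e0 {A : Type*} [Ring A] (δ r0 r1 e0 e1 : A)
    (hδ : ∀ x : A, δ * x = x * δ) (hδu : IsUnit δ)
    (h1 : r0 * r0 = 1) (h2 : r1 * r1 = 1)
    (h3 : r0 * e0 = e0) (h4 : e0 * r0 = e0)
    (h5 : r1 * e1 = e1) (h6 : e1 * r1 = e1)
    (h7 : e0 * e0 = δ ^ 3 * e0) (h8 : e1 * e1 = δ * e1)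
    (h9 : r0 * e1 * e0 = r1 * e0) (h10 : e0 * e1 * r0 = e0 * r1)
    (h11 : e1 * r0 * e1 * r0 * e1 = e1)
    (h12 : e1 * r0 * e1 * r0 * r1 = e1 * r0 * r1 * r0)
    (h13 : e0 * r1 * e0 = δ ^ 2 * e0)
    (h14 : r1 * r0 * e1 * r0 * e1 = r0 * r1 * r0 * e1)
    (h15 : (r1 * r0) ^ 6 = 1) :
    (r1 * r0 * r1 * r0 * r1) * e0 = e0 * (r1 * r0 * r1 * r0 * r1) ∧ r0 * e0 = e0 * r0 ∧ (r1 * r0 * r1 * r0 * r1) * e0 * (r1 * r0 * r1 * r0 * r1) = e0 ∧ r0 * e0 * r0 = e0 := by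
  -- e1 * e0 = r0 * r1 * e0
  have h9' : e1 * e0 = r0 * r1 * e0 := by
    have h := congrArg (fun x => r0 * x) h9
    simp only [← mul_assoc, h1, one_mul] at h
    rw [h]
  -- e0 * e1 = e0 * r1 * r0
  have h10' : e0 * e1 = e0 * r1 * r0 := by
    have h := congrArg (fun x => x * r0) h10
    simp only [mul_assoc, h1, mul_one] at h
    simp only [← mul_assoc] at h
    rw [h]
  -- w * e0 = e0
  have key1 : r1 * r0 * r1 * r0 * r1 * e0 = e0 := by
    calc r1 * r0 * r1 * r0 * r1 * e0
        = r1 * r0 * r1 * r0 * (r0 * e1 * e0) := by rw [h9]; simp only [mul_assoc]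
      _ = r1 * r0 * (r1 * e1) * e0 := by
          simp only [← mul_assoc, mul_assoc _ r0 r0, h1, mul_one]
      _ = r1 * r0 * (e1 * e0) := by rw [h5]; simp only [mul_assoc]
      _ = r1 * (r0 * r0) * r1 * e0 := by rw [h9']; simp only [← mul_assoc]
      _ = e0 := by rw [h1, mul_one, h2, one_mul]
  -- e0 * w = e0
  have key2 : e0 * (r1 * r0 * r1 * r0 * r1) = e0 := by
    calc e0 * (r1 * r0 * r1 * r0 * r1)
        = e0 * e1 * (r1 * r0 * r1) := by
          rw [h10']; simp only [← mul_assoc]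
      _ = e0 * e1 * (r0 * r1) := by
          simp only [← mul_assoc]
          rw [mul_assoc e0 e1 r1, h6]
      _ = e0 * r1 * (r0 * r0) * r1 := by rw [h10']; simp only [← mul_assoc]
      _ = e0 := by rw [h1, mul_one, mul_assoc, h2, mul_one]
  refine ⟨by rw [key1, key2], by rw [h3, h4], ?_, by rw [h3, h4]⟩
  rw [key1, key2]
end

section
/- In the Brauer algebra Br(D₄) of simply laced type, the elements R₁R₂R₄ and E₃ satisfy the relation (R₁R₂R₄)E₃E₁E₂E₄ = R₃E₁E₂E₄, corresponding to the image under φ of the G₂-relation r₀e₁e₀ = r₁e₀. -/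
/-- The nodes of the Dynkin diagram D₄. -/
def nodesD4 : Set ℕ := {1, 2, 3, 4}

/-- Adjacency in D₄: node 3 is adjacent to 1, 2, 4, which are pairwise non-adjacent. -/
def adjD4 (i j : ℕ) : Prop :=
  i ∈ nodesD4 ∧ j ∈ nodesD4 ∧ i ≠ j ∧ (i = 3 ∨ j = 3)

/-- In Br(D₄), (R₁R₂R₄)E₃(E₁E₂E₄) = R₃(E₁E₂E₄), the image under φ of the G₂ relation r₀e₁e₀ = r₁e₀. -/
theorem brauerD4_phi_rel {A : Type*} [Ring A] (δ : A) (R E : ℕ → A)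
    (hδ : ∀ x : A, δ * x = x * δ) (hδu : IsUnit δ)
    (hR : ∀ i ∈ nodesD4, R i * R i = 1)
    (hE : ∀ i ∈ nodesD4, E i * E i = δ * E i)
    (hRE : ∀ i ∈ nodesD4, R i * E i = E i ∧ E i * R i = E i)
    (hnonadj : ∀ i ∈ nodesD4, ∀ j ∈ nodesD4, i ≠ j → ¬ adjD4 i j →
      R i * R j = R j * R i ∧ E i * R j = R j * E i ∧ E i * E j = E j * E i)
    (hadj : ∀ i j, adjD4 i j →
      R i * R j * R i = R j * R i * R j ∧
      R j * R i * E j = E i * E j ∧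
      R i * E j * R i = R j * E i * R j) :
    R 1 * R 2 * R 4 * (E 3 * (E 1 * E 2 * E 4)) = R 3 * (E 1 * E 2 * E 4) := by
  have m1 : (1 : ℕ) ∈ nodesD4 := by simp [nodesD4]
  have m2 : (2 : ℕ) ∈ nodesD4 := by simp [nodesD4]
  have m3 : (3 : ℕ) ∈ nodesD4 := by simp [nodesD4]
  have m4 : (4 : ℕ) ∈ nodesD4 := by simp [nodesD4]
  have a31 : adjD4 3 1 := ⟨m3, m1, by norm_num, Or.inl rfl⟩
  have a32 : adjD4 3 2 := ⟨m3, m2, by norm_num, Or.inl rfl⟩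
  have a34 : adjD4 3 4 := ⟨m3, m4, by norm_num, Or.inl rfl⟩
  have na : ∀ i ∈ nodesD4, ∀ j ∈ nodesD4, i ≠ 3 → j ≠ 3 → i ≠ j →
      R i * R j = R j * R i ∧ E i * R j = R j * E i ∧ E i * E j = E j * E i := by
    intro i hi j hj hi3 hj3 hij
    exact hnonadj i hi j hj hij (fun h => by rcases h with ⟨_, _, _, h | h⟩ <;> [exact hi3 h; exact hj3 h])
  -- basic commutations
  obtain ⟨c14, -, -⟩ := na 1 m1 4 m4 (by norm_num) (by norm_num) (by norm_num)
  obtain ⟨c12, -, -⟩ := na 1 m1 2 m2 (by norm_num) (by norm_num) (by norm_num)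
  obtain ⟨-, -, ce12⟩ := na 1 m1 2 m2 (by norm_num) (by norm_num) (by norm_num)
  obtain ⟨-, -, ce14⟩ := na 1 m1 4 m4 (by norm_num) (by norm_num) (by norm_num)
  obtain ⟨-, -, ce24⟩ := na 2 m2 4 m4 (by norm_num) (by norm_num) (by norm_num)
  have h31 : R 1 * R 3 * E 1 = E 3 * E 1 := (hadj 3 1 a31).2.1
  have h32 : R 2 * R 3 * E 2 = E 3 * E 2 := (hadj 3 2 a32).2.1
  have h34 : R 4 * R 3 * E 4 = E 3 * E 4 := (hadj 3 4 a34).2.1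
  have r1sq := hR 1 m1
  have r2sq := hR 2 m2
  -- helper rewrites in right-associated form
  have H31 : ∀ x : A, E 3 * (E 1 * x) = R 1 * (R 3 * (E 1 * x)) := by
    intro x; rw [← mul_assoc, ← h31]; noncomm_ring
  have H32 : ∀ x : A, E 3 * (E 2 * x) = R 2 * (R 3 * (E 2 * x)) := by
    intro x; rw [← mul_assoc, ← h32]; noncomm_ring
  have H34 : ∀ x : A, R 4 * (R 3 * (E 4 * x)) = E 3 * (E 4 * x) := by
    intro x; rw [← mul_assoc, ← mul_assoc, h34, mul_assoc]
  have C14 : ∀ x : A, R 4 * (R 1 * x) = R 1 * (R 4 * x) := by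
    intro x; rw [← mul_assoc, ← c14, mul_assoc]
  have C12 : ∀ x : A, R 2 * (R 1 * x) = R 1 * (R 2 * x) := by
    intro x; rw [← mul_assoc, ← c12, mul_assoc]
  have Sq1 : ∀ x : A, R 1 * (R 1 * x) = x := by
    intro x; rw [← mul_assoc, r1sq, one_mul]
  have Sq2 : ∀ x : A, R 2 * (R 2 * x) = x := by
    intro x; rw [← mul_assoc, r2sq, one_mul]
  have Eperm1 : E 1 * (E 2 * E 4) = E 4 * (E 1 * E 2) := by
    rw [ce24, ← mul_assoc, ce14, mul_assoc]
  have Eperm2 : E 4 * (E 1 * E 2) = E 2 * (E 4 * E 1) := by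
    rw [ce12, ← mul_assoc, ← ce24, mul_assoc]
  have Eperm3 : E 2 * (E 4 * E 1) = E 1 * (E 2 * E 4) := by
    rw [← ce14, ← mul_assoc, ← ce12, mul_assoc]
  simp only [mul_assoc]
  rw [H31, C14, C12, Sq1, Eperm1, H34, Eperm2, H32, Sq2, Eperm3]
end

section
/- In a Brauer algebra of simply laced type Q, for nodes i ∼ j (adjacent), the relations EᵢRⱼRᵢ = EᵢEⱼ, EᵢRⱼEᵢ = Eᵢ, and EᵢEⱼEᵢ = Eᵢ follow from the defining relations. -/
/-- In a Brauer algebra of simply laced type Q, for adjacent nodes i ∼ j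
(with generators Rᵢ, Rⱼ, Eᵢ, Eⱼ and loop parameter δ, satisfying the defining
relations relevant to the pair {i,j}), the relations
EᵢRⱼRᵢ = EᵢEⱼ, EᵢRⱼEᵢ = Eᵢ, EᵢEⱼEᵢ = Eᵢ follow. -/
theorem brauer_simply_laced_adjacent_rels {A : Type*} [Ring A]
    (δ Ri Rj Ei Ej : A)
    (hδ : ∀ x : A, δ * x = x * δ) (hδu : IsUnit δ)
    (hRi : Ri * Ri = 1) (hRj : Rj * Rj = 1)
    (hEi : Ei * Ei = δ * Ei) (hEj : Ej * Ej = δ * Ej)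
    (hREi : Ri * Ei = Ei) (hERi : Ei * Ri = Ei)
    (hREj : Rj * Ej = Ej) (hERj : Ej * Rj = Ej)
    (hbraid : Ri * Rj * Ri = Rj * Ri * Rj)
    (hRRE1 : Rj * Ri * Ej = Ei * Ej) (hRRE2 : Ri * Rj * Ei = Ej * Ei)
    (hRER : Ri * Ej * Ri = Rj * Ei * Rj) :
    Ei * Rj * Ri = Ei * Ej ∧ Ei * Rj * Ei = Ei ∧ Ei * Ej * Ei = Ei := by
  have h1 : Rj * Ri * Ej * Ri * Rj = Ei := by
    calc Rj * Ri * Ej * Ri * Rj = Rj * (Ri * Ej * Ri) * Rj := by noncomm_ring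
      _ = Rj * (Rj * Ei * Rj) * Rj := by rw [hRER]
      _ = Rj * Rj * Ei * (Rj * Rj) := by noncomm_ring
      _ = Ei := by rw [hRj]; simp
  have g1 : Ei * Rj * Ri = Ei * Ej := by
    calc Ei * Rj * Ri = Rj * Ri * Ej * Ri * Rj * Rj * Ri := by rw [h1]
      _ = Rj * Ri * Ej * (Ri * (Rj * Rj) * Ri) := by noncomm_ring
      _ = Rj * Ri * Ej := by rw [hRj, mul_one, hRi, mul_one]
      _ = Ei * Ej := hRRE1
  have g2 : Ei * Rj * Ei = Ei := by
    calc Ei * Rj * Ei = Ei * Rj * (Rj * Ri * Ej * Ri * Rj) := by rw [h1]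
      _ = Ei * (Rj * Rj) * Ri * Ej * Ri * Rj := by noncomm_ring
      _ = Ei * Ri * Ej * Ri * Rj := by rw [hRj, mul_one]
      _ = Ei * Ej * Ri * Rj := by rw [hERi]
      _ = Rj * Ri * Ej * Ri * Rj := by rw [← hRRE1]
      _ = Ei := h1
  refine ⟨g1, g2, ?_⟩
  calc Ei * Ej * Ei = Ei * (Ej * Ei) := by rw [mul_assoc]
    _ = Ei * (Ri * Rj * Ei) := by rw [← hRRE2]
    _ = Ei * Ri * Rj * Ei := by noncomm_ring
    _ = Ei * Rj * Ei := by rw [hERi]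
    _ = Ei := g2
end

section
/- In a Brauer algebra of simply laced type, for nodes i ∼ j ∼ k with i ≁ k, the relations EⱼEᵢRₖEⱼ = EⱼRᵢEₖEⱼ and EⱼRᵢRₖEⱼ = EⱼEᵢEₖEⱼ hold. -/
/-- In a Brauer algebra of simply laced type, for nodes i ∼ j ∼ k with i ≁ k
(with generators and loop parameter δ satisfying the defining relations relevant
to these three nodes), the relations EⱼEᵢRₖEⱼ = EⱼRᵢEₖEⱼ and
EⱼRᵢRₖEⱼ = EⱼEᵢEₖEⱼ hold. -/
theorem brauer_simply_laced_triple_rels {A : Type*} [Ring A]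
    (δ Ri Rj Rk Ei Ej Ek : A)
    (hδ : ∀ x : A, δ * x = x * δ) (hδu : IsUnit δ)
    (hRi : Ri * Ri = 1) (hRj : Rj * Rj = 1) (hRk : Rk * Rk = 1)
    (hEi : Ei * Ei = δ * Ei) (hEj : Ej * Ej = δ * Ej) (hEk : Ek * Ek = δ * Ek)
    (hREi : Ri * Ei = Ei) (hERi : Ei * Ri = Ei)
    (hREj : Rj * Ej = Ej) (hERj : Ej * Rj = Ej)
    (hREk : Rk * Ek = Ek) (hERk : Ek * Rk = Ek)
    -- i ∼ j
    (hbraidij : Ri * Rj * Ri = Rj * Ri * Rj)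
    (hRREij : Rj * Ri * Ej = Ei * Ej) (hRREji : Ri * Rj * Ei = Ej * Ei)
    (hRERij : Ri * Ej * Ri = Rj * Ei * Rj)
    -- j ∼ k
    (hbraidjk : Rj * Rk * Rj = Rk * Rj * Rk)
    (hRREjk : Rk * Rj * Ek = Ej * Ek) (hRREkj : Rj * Rk * Ej = Ek * Ej)
    (hRERjk : Rj * Ek * Rj = Rk * Ej * Rk)
    -- i ≁ k
    (hRRik : Ri * Rk = Rk * Ri)
    (hERik : Ei * Rk = Rk * Ei) (hERki : Ek * Ri = Ri * Ek)
    (hEEik : Ei * Ek = Ek * Ei) :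
    Ej * Ei * Rk * Ej = Ej * Ri * Ek * Ej ∧
    Ej * Ri * Rk * Ej = Ej * Ei * Ek * Ej := by
  have h1 : Ej * Ei * Rj = Ej * Ri := by
    calc Ej * Ei * Rj = Ri * (Rj * Ei * Rj) := by
          rw [← hRREji]; noncomm_ring
      _ = Ri * Ri * Ej * Ri := by rw [← hRERij]; noncomm_ring
      _ = Ej * Ri := by rw [hRi, one_mul]
  have h2 : Ej * Ei = Ej * Ri * Rj := by
    calc Ej * Ei = Ej * Ei * (Rj * Rj) := by rw [hRj, mul_one]
      _ = Ej * Ei * Rj * Rj := by noncomm_ring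
      _ = Ej * Ri * Rj := by rw [h1]
  constructor
  · calc Ej * Ei * Rk * Ej = Ej * Ri * (Rj * Rk * Ej) := by
          rw [h2]; noncomm_ring
      _ = Ej * Ri * (Ek * Ej) := by rw [hRREkj]
      _ = Ej * Ri * Ek * Ej := by noncomm_ring
  · calc Ej * Ri * Rk * Ej = Ej * Ei * Rj * Rk * Ej := by rw [h1]
      _ = Ej * Ei * (Rj * Rk * Ej) := by noncomm_ring
      _ = Ej * Ei * (Ek * Ej) := by rw [hRREkj]
      _ = Ej * Ei * Ek * Ej := by noncomm_ring
end
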